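/- Let X be a well-ordered alphabet, ρ an X-diagonal braiding on kX, and [−]_ρ the ρ-bracketing on the free algebra k⟨X⟩ (defined by [x]_ρ = x for letters, [u]_ρ = [[u_L]_ρ, [u_R]_ρ]_ρ for Lyndon u of length ≥ 2 with Shirshov factorization (u_L, u_R), and [u]_ρ = [u_L]_ρ[u_R]_ρ otherwise). Then for each word u, [u]_ρ ∈ u + span{ w : w a rearrangement of u with w ≺ u }. Consequently {[u]_ρ : u word on X} is a basis of k⟨X⟩. -/

import Mathlib

set_option linter.unusedSectionVars false
set_option maxHeartbeats 1000000

variable {X : Type*} [LinearOrder X] [WellFoundedLT X]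

/-- The partial order `≺` on words: `u ≺ v` iff `u = r ++ x :: s`, `v = r ++ y :: t`
with letters `x < y`. -/
def Prec (u v : List X) : Prop :=
  ∃ (r s t : List X) (x y : X), x < y ∧ u = r ++ x :: s ∧ v = r ++ y :: t

/-- The pseudo-lexicographic order: `u <_lex v` iff `v` is a proper prefix of `u` or `u ≺ v`. -/
def PLex (u v : List X) : Prop :=
  (v <+: u ∧ v ≠ u) ∨ Prec u v

/-- `u ≤_lex v`. -/
def PLexLe (u v : List X) : Prop := u = v ∨ PLex u v

/-- A Lyndon word (Kharchenko convention): a nonempty word strictly greater in the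
pseudo-lexicographic order than each of its proper nonempty suffixes. -/
def IsLyndon (u : List X) : Prop :=
  u ≠ [] ∧ ∀ v w : List X, u = v ++ w → v ≠ [] → w ≠ [] → PLex w u


/-- The Shirshov factorization of `u`: `u = uL ++ uR` where `uR` is the
pseudo-lexicographically largest proper (nonempty) suffix of `u`. -/
def IsShirshov (u uL uR : List X) : Prop :=
  u = uL ++ uR ∧ uL ≠ [] ∧ uR ≠ [] ∧
    ∀ w : List X, w <:+ u → w ≠ u → w ≠ [] → w = uR ∨ PLex w uR


/-- The multiplicative extension of the diagonal braiding scalars `ρ` to words. -/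
def rhoW {k : Type*} [Field k] (ρ : X → X → k) (u v : List X) : k :=
  (u.map fun x => (v.map (ρ x)).prod).prod

/-! ### Auxiliary order-theoretic lemmas -/

/-- Embed a word into `List (WithTop X)` (lex order) so that `PLex` becomes `<`. -/
def emb (u : List X) : List (WithTop X) := (u.map (fun x : X => (x : WithTop X))) ++ [⊤]

lemma emb_injective : Function.Injective (emb (X := X)) := by
  intro u v h
  unfold emb at h
  have hl : u.length = v.length := by
    have := congrArg List.length h; simpa using this
  have h2 := List.append_inj_left h (by simpa using hl)
  exact List.map_injective_iff.mpr (fun a b hab => by simpa using hab) h2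

lemma lex_middle {α : Type*} [LT α] (r : List α) {x y : α} (h : x < y) (s t : List α) :
    List.Lex (· < ·) (r ++ x :: s) (r ++ y :: t) := by
  induction r with
  | nil => exact List.Lex.rel h
  | cons a r ih => exact List.Lex.cons ih

lemma plex_emb_lt {u v : List X} (h : PLex u v) : emb u < emb v := by
  show List.Lex (· < ·) (emb u) (emb v)
  rcases h with ⟨⟨w, hw⟩, hne⟩ | ⟨r, s, t, x, y, hxy, hu, hv⟩
  · cases w with
    | nil => exact absurd (show v = u by simpa using hw) hne
    | cons z w' =>
      have h1 : emb u = (v.map (fun x : X => (x : WithTop X))) ++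
          (↑z : WithTop X) :: (w'.map (fun x : X => (x : WithTop X)) ++ [⊤]) := by
        rw [← hw]; simp [emb]
      have h2 : emb v = (v.map (fun x : X => (x : WithTop X))) ++ (⊤ : WithTop X) :: [] := by
        simp [emb]
      rw [h1, h2]
      exact lex_middle _ (WithTop.coe_lt_top z) _ _
  · subst hu; subst hv
    have h1 : emb (r ++ x :: s) = (r.map (fun x : X => (x : WithTop X))) ++
        (↑x : WithTop X) :: (s.map (fun x : X => (x : WithTop X)) ++ [⊤]) := by simp [emb]
    have h2 : emb (r ++ y :: t) = (r.map (fun x : X => (x : WithTop X))) ++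
        (↑y : WithTop X) :: (t.map (fun x : X => (x : WithTop X)) ++ [⊤]) := by simp [emb]
    rw [h1, h2]
    exact lex_middle _ (WithTop.coe_lt_coe.mpr hxy) _ _

lemma plex_cons {a : X} {u v : List X} (h : PLex u v) : PLex (a :: u) (a :: v) := by
  rcases h with ⟨⟨w, hw⟩, hne⟩ | ⟨r, s, t, x, y, hxy, hu, hv⟩
  · exact Or.inl ⟨⟨w, by rw [List.cons_append, hw]⟩, by simpa using hne⟩
  · exact Or.inr ⟨a :: r, s, t, x, y, hxy, by simp [hu], by simp [hv]⟩

lemma plex_total : ∀ u v : List X, u = v ∨ PLex u v ∨ PLex v u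
  | [], [] => Or.inl rfl
  | [], b :: v => Or.inr (Or.inr (Or.inl ⟨⟨b :: v, rfl⟩, by simp⟩))
  | a :: u, [] => Or.inr (Or.inl (Or.inl ⟨⟨a :: u, rfl⟩, by simp⟩))
  | a :: u, b :: v => by
    rcases lt_trichotomy a b with h | h | h
    · exact Or.inr (Or.inl (Or.inr ⟨[], u, v, a, b, h, rfl, rfl⟩))
    · subst h
      rcases plex_total u v with h | h | h
      · exact Or.inl (by rw [h])
      · exact Or.inr (Or.inl (plex_cons h))
      · exact Or.inr (Or.inr (plex_cons h))
    · exact Or.inr (Or.inr (Or.inr ⟨[], v, u, b, a, h, rfl, rfl⟩))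

lemma plex_iff {u v : List X} : PLex u v ↔ emb u < emb v := by
  refine ⟨plex_emb_lt, fun h => ?_⟩
  rcases plex_total u v with rfl | h' | h'
  · exact absurd h (lt_irrefl _)
  · exact h'
  · exact absurd h (not_lt_of_gt (plex_emb_lt h'))

lemma prec_ne {u v : List X} (h : Prec u v) : u ≠ v := by
  rintro rfl
  exact lt_irrefl _ (plex_emb_lt (Or.inr h))

lemma prec_of_plex_of_length {u v : List X} (h : PLex u v) (hl : u.length = v.length) :
    Prec u v := by
  rcases h with ⟨hpre, hne⟩ | h
  · exact absurd (hpre.eq_of_length hl.symm) hne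
  · exact h

lemma prec_trans_of_length {v w u : List X} (h1 : Prec v w) (h2 : Prec w u)
    (hl : v.length = u.length) : Prec v u := by
  have : PLex v u := plex_iff.mpr
    (lt_trans (plex_iff.mp (Or.inr h1)) (plex_iff.mp (Or.inr h2)))
  exact prec_of_plex_of_length this hl

lemma exists_shirshov (u : List X) (h2 : 2 ≤ u.length) : ∃ uL uR, IsShirshov u uL uR := by
  classical
  set S : Finset (List X) := (u.tails.toFinset.erase []).erase u with hS
  have hmem : ∀ w : List X, w ∈ S ↔ (w <:+ u ∧ w ≠ u ∧ w ≠ []) := by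
    intro w
    simp only [hS, Finset.mem_erase, List.mem_toFinset, List.mem_tails]
    tauto
  have hne : S.Nonempty := by
    match u, h2 with
    | a :: b :: l, _ =>
      refine ⟨b :: l, (hmem _).mpr ⟨⟨[a], rfl⟩, ?_, by simp⟩⟩
      intro h
      have := congrArg List.length h
      simp at this
  obtain ⟨uR, hRS, hmax⟩ := S.exists_max_image emb hne
  obtain ⟨hsuf, hneu, hnnil⟩ := (hmem uR).mp hRS
  obtain ⟨uL, huL⟩ := hsuf
  refine ⟨uL, uR, huL.symm, ?_, hnnil, ?_⟩
  · rintro rfl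
    exact hneu (by simpa using huL)
  · intro w hw hwu hwn
    have hwS : w ∈ S := (hmem w).mpr ⟨hw, hwu, hwn⟩
    rcases lt_or_eq_of_le (hmax w hwS) with h | h
    · exact Or.inr (plex_iff.mpr h)
    · exact Or.inl (emb_injective h)

lemma prec_append_right {a uL : List X} (h : Prec a uL) (b c : List X) :
    Prec (a ++ b) (uL ++ c) := by
  obtain ⟨r, s, t, x, y, hxy, ha, hL⟩ := h
  exact ⟨r, s ++ b, t ++ c, x, y, hxy, by simp [ha], by simp [hL]⟩

lemma prec_append_left (uL : List X) {b uR : List X} (h : Prec b uR) :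
    Prec (uL ++ b) (uL ++ uR) := by
  obtain ⟨r, s, t, x, y, hxy, hb, hR⟩ := h
  exact ⟨uL ++ r, s, t, x, y, hxy, by simp [hb], by simp [hR]⟩

lemma prec_concat_of_le {u uR b : List X} (hR : Prec uR u) (hb : b = uR ∨ Prec b uR)
    (a : List X) : Prec (b ++ a) u := by
  obtain ⟨r, s, t, x, y, hxy, huR, hu⟩ := hR
  rcases hb with rfl | ⟨r', s', t', x', y', hxy', hbe, huR'⟩
  · exact ⟨r, s ++ a, t, x, y, hxy, by simp [huR], hu⟩
  · have key : r ++ x :: s = r' ++ y' :: t' := by rw [← huR, ← huR']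
    rcases List.append_eq_append_iff.mp key with ⟨c, hc1, hc2⟩ | ⟨c, hc1, hc2⟩
    · cases c with
      | nil =>
        simp only [List.append_nil] at hc1
        simp only [List.nil_append, List.cons.injEq] at hc2
        subst hc1
        exact ⟨r', s' ++ a, t, x', y, lt_trans (hc2.1 ▸ hxy') hxy, by simp [hbe], hu⟩
      | cons z c' =>
        simp only [List.cons_append, List.cons.injEq] at hc2
        obtain ⟨rfl, _⟩ := hc2
        exact ⟨r, c' ++ x' :: s' ++ a, t, x, y, hxy, by simp [hbe, hc1], hu⟩
    · cases c with
      | nil =>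
        simp only [List.append_nil] at hc1
        simp only [List.nil_append, List.cons.injEq] at hc2
        subst hc1
        exact ⟨r, s' ++ a, t, x', y, lt_trans hxy' (hc2.1 ▸ hxy), by simp [hbe], hu⟩
      | cons z c' =>
        simp only [List.cons_append, List.cons.injEq] at hc2
        obtain ⟨rfl, _⟩ := hc2
        exact ⟨r', s' ++ a, c' ++ y :: t, x', y', hxy', by simp [hbe],
          by simp [hu, hc1]⟩

lemma list_length_eq_of_coe_multiset_eq {a b : List X} (h : (↑a : Multiset X) = ↑b) :
    a.length = b.length := by
  simpa using congrArg Multiset.card h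

/-- The set of "error" basis monomials for a word `u`. -/
def Eset (k : Type*) [Field k] (u : List X) : Set (MonoidAlgebra k (FreeMonoid X)) :=
  {p | ∃ w : List X, (↑w : Multiset X) = ↑u ∧ Prec w u ∧
    p = MonoidAlgebra.single (FreeMonoid.ofList w) 1}

lemma single_mul_single_word {k : Type*} [Field k] (a b : List X) :
    (MonoidAlgebra.single (FreeMonoid.ofList a) (1 : k)) *
      MonoidAlgebra.single (FreeMonoid.ofList b) 1 =
      MonoidAlgebra.single (FreeMonoid.ofList (a ++ b)) 1 := by
  rw [MonoidAlgebra.single_mul_single, one_mul, FreeMonoid.ofList_append]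

lemma bracketing_triangular {k : Type*} [Field k]
    (ρ : X → X → k)
    (br : List X → MonoidAlgebra k (FreeMonoid X))
    (hempty : br [] = 1)
    (hletter : ∀ x : X, br [x] = MonoidAlgebra.single (FreeMonoid.ofList [x]) 1)
    (hlyndon : ∀ u uL uR : List X, IsLyndon u → 2 ≤ u.length → IsShirshov u uL uR →
      br u = br uL * br uR - rhoW ρ uL uR • (br uR * br uL))
    (hnotlyndon : ∀ u uL uR : List X, ¬ IsLyndon u → 2 ≤ u.length →
      IsShirshov u uL uR → br u = br uL * br uR) :
    ∀ (n : ℕ) (u : List X), u.length ≤ n →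
      br u - MonoidAlgebra.single (FreeMonoid.ofList u) 1 ∈ Submodule.span k (Eset k u) := by
  intro n
  induction n with
  | zero =>
    intro u hu
    have : u = [] := List.eq_nil_of_length_eq_zero (Nat.le_antisymm hu (Nat.zero_le _))
    subst this
    rw [hempty, FreeMonoid.ofList_nil, ← MonoidAlgebra.one_def, sub_self]
    exact Submodule.zero_mem _
  | succ n ih =>
    intro u hu
    match u, hu with
    | [], _ =>
      rw [hempty, FreeMonoid.ofList_nil, ← MonoidAlgebra.one_def, sub_self]
      exact Submodule.zero_mem _
    | [x], _ =>
      rw [hletter x, sub_self]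
      exact Submodule.zero_mem _
    | x :: y :: l, hu =>
      set u : List X := x :: y :: l with hudef
      have hlen2 : 2 ≤ u.length := by simp [hudef]
      obtain ⟨uL, uR, hsh⟩ := exists_shirshov u hlen2
      obtain ⟨huLR, hLne, hRne, hmax⟩ := hsh
      have hulen : u.length = uL.length + uR.length := by rw [huLR, List.length_append]
      have hL1 : 1 ≤ uL.length := List.length_pos_iff.mpr hLne
      have hR1 : 1 ≤ uR.length := List.length_pos_iff.mpr hRne
      have hun : u.length ≤ n + 1 := hu
      have hEL := ih uL (by omega)
      have hER := ih uR (by omega)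
      -- generator lemmas
      have genA1 : ∀ w : List X, (↑w : Multiset X) = ↑uL → Prec w uL →
          ∀ b : List X, (↑b : Multiset X) = ↑uR →
          MonoidAlgebra.single (FreeMonoid.ofList (w ++ b)) (1 : k) ∈ Eset k u := by
        intro w hw1 hw2 b hb
        refine ⟨w ++ b, ?_, ?_, rfl⟩
        · rw [huLR]
          exact Multiset.coe_eq_coe.mpr
            ((Multiset.coe_eq_coe.mp hw1).append (Multiset.coe_eq_coe.mp hb))
        · rw [huLR]; exact prec_append_right hw2 b uR
      have genA2 : ∀ w : List X, (↑w : Multiset X) = ↑uR → Prec w uR →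
          MonoidAlgebra.single (FreeMonoid.ofList (uL ++ w)) (1 : k) ∈ Eset k u := by
        intro w hw1 hw2
        refine ⟨uL ++ w, ?_, ?_, rfl⟩
        · rw [huLR]
          exact Multiset.coe_eq_coe.mpr
            ((List.Perm.refl uL).append (Multiset.coe_eq_coe.mp hw1))
        · rw [huLR]; exact prec_append_left uL hw2
      -- multiplication lemmas
      have mulR : ∀ z : MonoidAlgebra k (FreeMonoid X), z ∈ Submodule.span k (Eset k uL) →
          z * MonoidAlgebra.single (FreeMonoid.ofList uR) 1 ∈ Submodule.span k (Eset k u) := by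
        intro z hz
        have hle : Submodule.span k (Eset k uL) ≤ (Submodule.span k (Eset k u)).comap
            (LinearMap.mulRight k (MonoidAlgebra.single (FreeMonoid.ofList uR) (1 : k))) := by
          rw [Submodule.span_le]
          rintro p ⟨w, hw1, hw2, rfl⟩
          simp only [Set.mem_setOf_eq, SetLike.mem_coe, Submodule.mem_comap,
            LinearMap.mulRight_apply]
          rw [single_mul_single_word]
          exact Submodule.subset_span (genA1 w hw1 hw2 uR rfl)
        exact hle hz
      have mulL : ∀ z : MonoidAlgebra k (FreeMonoid X), z ∈ Submodule.span k (Eset k uR) →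
          MonoidAlgebra.single (FreeMonoid.ofList uL) 1 * z ∈ Submodule.span k (Eset k u) := by
        intro z hz
        have hle : Submodule.span k (Eset k uR) ≤ (Submodule.span k (Eset k u)).comap
            (LinearMap.mulLeft k (MonoidAlgebra.single (FreeMonoid.ofList uL) (1 : k))) := by
          rw [Submodule.span_le]
          rintro p ⟨w, hw1, hw2, rfl⟩
          simp only [Set.mem_setOf_eq, SetLike.mem_coe, Submodule.mem_comap,
            LinearMap.mulLeft_apply]
          rw [single_mul_single_word]
          exact Submodule.subset_span (genA2 w hw1 hw2)
        exact hle hz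
      have mulLR : ∀ z z' : MonoidAlgebra k (FreeMonoid X),
          z ∈ Submodule.span k (Eset k uL) → z' ∈ Submodule.span k (Eset k uR) →
          z * z' ∈ Submodule.span k (Eset k u) := by
        intro z z' hz hz'
        have h1 := Submodule.mul_mem_mul hz hz'
        rw [Submodule.span_mul_span] at h1
        refine Submodule.span_le.mpr ?_ h1
        rintro p ⟨p1, hp1, p2, hp2, rfl⟩
        obtain ⟨w, hw1, hw2, rfl⟩ := hp1
        obtain ⟨w', hw1', hw2', rfl⟩ := hp2
        show MonoidAlgebra.single (FreeMonoid.ofList w) (1 : k) *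
          MonoidAlgebra.single (FreeMonoid.ofList w') 1 ∈ _
        rw [single_mul_single_word]
        exact Submodule.subset_span (genA1 w hw1 hw2 w' hw1')
      have hδ : MonoidAlgebra.single (FreeMonoid.ofList u) (1 : k) =
          MonoidAlgebra.single (FreeMonoid.ofList uL) 1 *
          MonoidAlgebra.single (FreeMonoid.ofList uR) 1 := by
        rw [single_mul_single_word, huLR]
      have hApart : br uL * br uR - MonoidAlgebra.single (FreeMonoid.ofList u) 1 ∈
          Submodule.span k (Eset k u) := by
        have expand : br uL * br uR - MonoidAlgebra.single (FreeMonoid.ofList u) (1 : k) =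
            (br uL - MonoidAlgebra.single (FreeMonoid.ofList uL) 1) *
              MonoidAlgebra.single (FreeMonoid.ofList uR) 1 +
            MonoidAlgebra.single (FreeMonoid.ofList uL) 1 *
              (br uR - MonoidAlgebra.single (FreeMonoid.ofList uR) 1) +
            (br uL - MonoidAlgebra.single (FreeMonoid.ofList uL) 1) *
              (br uR - MonoidAlgebra.single (FreeMonoid.ofList uR) 1) := by
          rw [hδ]; noncomm_ring
        rw [expand]
        exact Submodule.add_mem _ (Submodule.add_mem _ (mulR _ hEL) (mulL _ hER))
          (mulLR _ _ hEL hER)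
      by_cases hlyn : IsLyndon u
      · -- Lyndon case
        have hprecR : Prec uR u := by
          have hpl : PLex uR u := hlyn.2 uL uR huLR hLne hRne
          rcases hpl with ⟨hpre, hne⟩ | h
          · exfalso
            have := hpre.length_le
            omega
          · exact h
        have genB : ∀ b : List X, (↑b : Multiset X) = ↑uR → (b = uR ∨ Prec b uR) →
            ∀ a : List X, (↑a : Multiset X) = ↑uL →
            MonoidAlgebra.single (FreeMonoid.ofList (b ++ a)) (1 : k) ∈ Eset k u := by
          intro b hb hbR a ha
          refine ⟨b ++ a, ?_, prec_concat_of_le hprecR hbR a, rfl⟩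
          rw [huLR]
          exact Multiset.coe_eq_coe.mpr
            (((Multiset.coe_eq_coe.mp hb).append (Multiset.coe_eq_coe.mp ha)).trans
              List.perm_append_comm)
        have mulL' : ∀ z : MonoidAlgebra k (FreeMonoid X), z ∈ Submodule.span k (Eset k uL) →
            MonoidAlgebra.single (FreeMonoid.ofList uR) 1 * z ∈ Submodule.span k (Eset k u) := by
          intro z hz
          have hle : Submodule.span k (Eset k uL) ≤ (Submodule.span k (Eset k u)).comap
              (LinearMap.mulLeft k (MonoidAlgebra.single (FreeMonoid.ofList uR) (1 : k))) := by
            rw [Submodule.span_le]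
            rintro p ⟨w, hw1, hw2, rfl⟩
            simp only [Set.mem_setOf_eq, SetLike.mem_coe, Submodule.mem_comap,
              LinearMap.mulLeft_apply]
            rw [single_mul_single_word]
            exact Submodule.subset_span (genB uR rfl (Or.inl rfl) w hw1)
          exact hle hz
        have mulR' : ∀ z : MonoidAlgebra k (FreeMonoid X), z ∈ Submodule.span k (Eset k uR) →
            z * MonoidAlgebra.single (FreeMonoid.ofList uL) 1 ∈ Submodule.span k (Eset k u) := by
          intro z hz
          have hle : Submodule.span k (Eset k uR) ≤ (Submodule.span k (Eset k u)).comap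
              (LinearMap.mulRight k (MonoidAlgebra.single (FreeMonoid.ofList uL) (1 : k))) := by
            rw [Submodule.span_le]
            rintro p ⟨w, hw1, hw2, rfl⟩
            simp only [Set.mem_setOf_eq, SetLike.mem_coe, Submodule.mem_comap,
              LinearMap.mulRight_apply]
            rw [single_mul_single_word]
            exact Submodule.subset_span (genB w hw1 (Or.inr hw2) uL rfl)
          exact hle hz
        have mulRL : ∀ z z' : MonoidAlgebra k (FreeMonoid X),
            z ∈ Submodule.span k (Eset k uR) → z' ∈ Submodule.span k (Eset k uL) →
            z * z' ∈ Submodule.span k (Eset k u) := by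
          intro z z' hz hz'
          have h1 := Submodule.mul_mem_mul hz hz'
          rw [Submodule.span_mul_span] at h1
          refine Submodule.span_le.mpr ?_ h1
          rintro p ⟨p1, hp1, p2, hp2, rfl⟩
          obtain ⟨w, hw1, hw2, rfl⟩ := hp1
          obtain ⟨w', hw1', hw2', rfl⟩ := hp2
          show MonoidAlgebra.single (FreeMonoid.ofList w) (1 : k) *
            MonoidAlgebra.single (FreeMonoid.ofList w') 1 ∈ _
          rw [single_mul_single_word]
          exact Submodule.subset_span (genB w hw1 (Or.inr hw2) w' hw1')
        have hRL : br uR * br uL ∈ Submodule.span k (Eset k u) := by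
          have expand2 : br uR * br uL =
              MonoidAlgebra.single (FreeMonoid.ofList uR) 1 *
                MonoidAlgebra.single (FreeMonoid.ofList uL) 1 +
              MonoidAlgebra.single (FreeMonoid.ofList uR) 1 *
                (br uL - MonoidAlgebra.single (FreeMonoid.ofList uL) 1) +
              (br uR - MonoidAlgebra.single (FreeMonoid.ofList uR) 1) *
                MonoidAlgebra.single (FreeMonoid.ofList uL) 1 +
              (br uR - MonoidAlgebra.single (FreeMonoid.ofList uR) 1) *
                (br uL - MonoidAlgebra.single (FreeMonoid.ofList uL) 1) := by
            noncomm_ring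
          rw [expand2]
          refine Submodule.add_mem _ (Submodule.add_mem _ (Submodule.add_mem _ ?_
            (mulL' _ hEL)) (mulR' _ hER)) (mulRL _ _ hER hEL)
          rw [single_mul_single_word]
          exact Submodule.subset_span (genB uR rfl (Or.inl rfl) uL rfl)
        rw [hlyndon u uL uR hlyn hlen2 ⟨huLR, hLne, hRne, hmax⟩]
        have : br uL * br uR - rhoW ρ uL uR • (br uR * br uL) -
            MonoidAlgebra.single (FreeMonoid.ofList u) 1 =
            (br uL * br uR - MonoidAlgebra.single (FreeMonoid.ofList u) 1) -
            rhoW ρ uL uR • (br uR * br uL) := by abel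
        rw [this]
        exact Submodule.sub_mem _ hApart (Submodule.smul_mem _ _ hRL)
      · rw [hnotlyndon u uL uR hlyn hlen2 ⟨huLR, hLne, hRne, hmax⟩]
        exact hApart

/-- Let `br = [-]_ρ` be the `ρ`-bracketing on `k⟨X⟩`, i.e. the map
satisfying `[1]_ρ = 1`, `[x]_ρ = x` for letters, `[u]_ρ = [[u_L]_ρ, [u_R]_ρ]_ρ` for
Lyndon `u` of length ≥ 2 and `[u]_ρ = [u_L]_ρ [u_R]_ρ` for non-Lyndon `u` of length
≥ 2 (Shirshov factorization `(u_L, u_R)`).  Then `[u]_ρ ∈ u + span{w : w` a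
rearrangement of `u` with `w ≺ u}`, and `{[u]_ρ}` is a basis of `k⟨X⟩`. -/
theorem bracketing_triangular_and_basis {k : Type*} [Field k]
    (ρ : X → X → k) (hρ : ∀ x y : X, ρ x y ≠ 0)
    (br : List X → MonoidAlgebra k (FreeMonoid X))
    (hempty : br [] = 1)
    (hletter : ∀ x : X, br [x] = MonoidAlgebra.single (FreeMonoid.ofList [x]) 1)
    (hlyndon : ∀ u uL uR : List X, IsLyndon u → 2 ≤ u.length → IsShirshov u uL uR →
      br u = br uL * br uR - rhoW ρ uL uR • (br uR * br uL))
    (hnotlyndon : ∀ u uL uR : List X, ¬ IsLyndon u → 2 ≤ u.length →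
      IsShirshov u uL uR → br u = br uL * br uR) :
    (∀ u : List X, br u - MonoidAlgebra.single (FreeMonoid.ofList u) 1 ∈
      Submodule.span k {p : MonoidAlgebra k (FreeMonoid X) | ∃ w : List X,
        (↑w : Multiset X) = ↑u ∧ Prec w u ∧
        p = MonoidAlgebra.single (FreeMonoid.ofList w) 1}) ∧
    LinearIndependent k (fun u : List X => br u) ∧
    Submodule.span k (Set.range br) = ⊤ := by
  classical
  have key : ∀ u : List X, br u - MonoidAlgebra.single (FreeMonoid.ofList u) 1 ∈
      Submodule.span k (Eset k u) := fun u =>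
    bracketing_triangular ρ br hempty hletter hlyndon hnotlyndon u.length u le_rfl
  refine ⟨fun u => key u, ?_, ?_⟩
  · -- linear independence
    rw [linearIndependent_iff']
    intro s g hsum i hi
    by_contra hgi
    set T := s.filter (fun j => g j ≠ 0) with hT
    set C := T.filter (fun v : List X => (↑v : Multiset X) = (↑i : Multiset X)) with hC
    have hiC : i ∈ C :=
      Finset.mem_filter.mpr ⟨Finset.mem_filter.mpr ⟨hi, hgi⟩, rfl⟩
    obtain ⟨u, huC, hmaxu⟩ := C.exists_max_image emb ⟨i, hiC⟩
    have huT : u ∈ T := (Finset.mem_filter.mp huC).1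
    have hgu : g u ≠ 0 := (Finset.mem_filter.mp huT).2
    have huS : u ∈ s := (Finset.mem_filter.mp huT).1
    have humult : (↑u : Multiset X) = ↑i := (Finset.mem_filter.mp huC).2
    set ev : MonoidAlgebra k (FreeMonoid X) →ₗ[k] k :=
      (Finsupp.lapply (FreeMonoid.ofList u)) ∘ₗ (MonoidAlgebra.coeffLinearEquiv k).toLinearMap
        with hev
    have herr0 : ∀ j : List X, (∀ w : List X, (↑w : Multiset X) = ↑j → Prec w j → w ≠ u) →
        ev (br j - MonoidAlgebra.single (FreeMonoid.ofList j) 1) = 0 := by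
      intro j hwne
      have hle : Submodule.span k (Eset k j) ≤ LinearMap.ker ev := by
        rw [Submodule.span_le]
        rintro p ⟨w, hw1, hw2, rfl⟩
        simp only [SetLike.mem_coe, LinearMap.mem_ker, hev, LinearMap.comp_apply, LinearEquiv.coe_coe,
          MonoidAlgebra.coeffLinearEquiv_apply, MonoidAlgebra.coeff_single, Finsupp.lapply_apply]
        exact Finsupp.single_eq_of_ne'
          (fun h => hwne w hw1 hw2 (FreeMonoid.ofList.injective h))
      exact LinearMap.mem_ker.mp (hle (key j))
    have hevsingle : ∀ j : List X, j ≠ u →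
        ev (MonoidAlgebra.single (FreeMonoid.ofList j) 1) = 0 := by
      intro j hj
      simp only [hev, LinearMap.comp_apply, LinearEquiv.coe_coe,
        MonoidAlgebra.coeffLinearEquiv_apply, MonoidAlgebra.coeff_single, Finsupp.lapply_apply]
      exact Finsupp.single_eq_of_ne' (fun h => hj (FreeMonoid.ofList.injective h))
    have hevbr : ∀ j : List X, ev (br j) =
        ev (br j - MonoidAlgebra.single (FreeMonoid.ofList j) 1) +
        ev (MonoidAlgebra.single (FreeMonoid.ofList j) 1) := by
      intro j
      rw [← map_add]
      congr 1
      abel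
    have happ := congrArg ev hsum
    rw [map_sum, map_zero] at happ
    simp only [map_smul] at happ
    have hs : ∑ j ∈ s, g j • ev (br j) = g u • ev (br u) := by
      refine Finset.sum_eq_single u ?_ ?_
      · intro j hjs hju
        by_cases hgj : g j = 0
        · rw [hgj, zero_smul]
        · have hjT : j ∈ T := by simp only [hT, Finset.mem_filter]; exact ⟨hjs, hgj⟩
          have hevj : ev (br j) = 0 := by
            rw [hevbr j, hevsingle j hju, add_zero]
            apply herr0
            intro w hw1 hw2 hwu
            subst hwu
            have hjC : j ∈ C := by
              simp only [hC, Finset.mem_filter]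
              exact ⟨hjT, hw1.symm.trans humult⟩
            have hle := hmaxu j hjC
            have hlt : emb w < emb j := plex_iff.mp (Or.inr hw2)
            exact absurd hle (not_le_of_gt hlt)
          rw [hevj, smul_zero]
      · intro h; exact absurd huS h
    have hevu : ev (br u) = 1 := by
      rw [hevbr u, herr0 u (fun w _ hw2 hwu => prec_ne hw2 hwu), zero_add]
      simp only [hev, LinearMap.comp_apply, LinearEquiv.coe_coe,
        MonoidAlgebra.coeffLinearEquiv_apply, MonoidAlgebra.coeff_single, Finsupp.lapply_apply]
      exact Finsupp.single_eq_same
    rw [hs, hevu, smul_eq_mul, mul_one] at happ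
    exact hgu happ
  · -- spanning
    have hfin : ∀ u : List X, {w : List X | (↑w : Multiset X) = ↑u ∧ Prec w u}.Finite := by
      intro u
      refine (u.permutations.finite_toSet).subset ?_
      intro w hw
      exact List.mem_permutations.mpr (Multiset.coe_eq_coe.mp hw.1)
    set m : List X → ℕ := fun u => {w : List X | (↑w : Multiset X) = ↑u ∧ Prec w u}.ncard
      with hm
    have hdec : ∀ w u : List X, (↑w : Multiset X) = ↑u → Prec w u → m w < m u := by
      intro w u hmw hp
      refine Set.ncard_lt_ncard ?_ (hfin u)
      constructor
      · rintro v ⟨hv1, hv2⟩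
        refine ⟨hv1.trans hmw, ?_⟩
        exact prec_trans_of_length hv2 hp
          (list_length_eq_of_coe_multiset_eq (hv1.trans hmw))
      · intro hsub
        obtain ⟨_, hpw⟩ := hsub ⟨hmw, hp⟩
        exact prec_ne hpw rfl
    have hsingle : ∀ (N : ℕ) (u : List X), m u ≤ N →
        MonoidAlgebra.single (FreeMonoid.ofList u) (1 : k) ∈
          Submodule.span k (Set.range br) := by
      intro N
      induction N with
      | zero =>
        intro u hu
        have h1 := key u
        have heq : MonoidAlgebra.single (FreeMonoid.ofList u) (1 : k) =
            br u - (br u - MonoidAlgebra.single (FreeMonoid.ofList u) 1) := by abel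
        rw [heq]
        refine Submodule.sub_mem _ (Submodule.subset_span ⟨u, rfl⟩) ?_
        refine Submodule.span_le.mpr ?_ h1
        rintro p ⟨w, hw1, hw2, rfl⟩
        exact absurd (Nat.lt_of_lt_of_le (hdec w u hw1 hw2) hu) (Nat.not_lt_zero _)
      | succ N ihN =>
        intro u hu
        have h1 := key u
        have heq : MonoidAlgebra.single (FreeMonoid.ofList u) (1 : k) =
            br u - (br u - MonoidAlgebra.single (FreeMonoid.ofList u) 1) := by abel
        rw [heq]
        refine Submodule.sub_mem _ (Submodule.subset_span ⟨u, rfl⟩) ?_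
        refine Submodule.span_le.mpr ?_ h1
        rintro p ⟨w, hw1, hw2, rfl⟩
        have : m w < m u := hdec w u hw1 hw2
        exact ihN w (by omega)
    rw [eq_top_iff]
    rintro f -
    rw [← MonoidAlgebra.ofCoeff_coeff f, ← Finsupp.sum_single f.coeff, Finsupp.sum,
      MonoidAlgebra.ofCoeff_sum]
    refine Submodule.sum_mem _ ?_
    intro a ha
    have : MonoidAlgebra.ofCoeff (Finsupp.single a (f.coeff a)) =
        (f.coeff a) • MonoidAlgebra.single a (1 : k) := by
      rw [MonoidAlgebra.ofCoeff_single, MonoidAlgebra.smul_single', mul_one]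
    rw [this]
    refine Submodule.smul_mem _ _ ?_
    rw [← FreeMonoid.ofList_toList a]
    exact hsingle _ _ le_rfl
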